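/- Let q be a prime power and let b be a positive integer. Let H_Y(d) = dim_{F_q} S_d − dim_{F_q} I_d be the Hilbert function of the set Y of F_q-rational points of P(1,1,b). Then the following identity of formal power series in t (with integer coefficients) holds: (1−t)²(1−t^b) · Σ_{d=0}^{∞} H_Y(d) t^d = 1 − t^{q+1} − 2t^{qb+1} + t^{qb+2} + t^{qb+q+1}. -/

import Mathlib

namespace P11b

attribute [local instance] Classical.propDecidable

/-- reduction of an exponent modulo the group of units: `rdc q 0 = 0`,
and for `m > 0`, `rdc q m` is the representative of `m` in `[1, q-1]` mod `q-1`. -/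
def rdc (q m : ℕ) : ℕ := if m = 0 then 0 else (m - 1) % (q - 1) + 1

/-- membership condition for the set of reduced exponent vectors in degree `d`. -/
def Cond (q b d : ℕ) (e : ℕ × ℕ × ℕ) : Prop :=
  if e.1 = 0 ∧ e.2.1 = 0 then
    (if e.2.2 = 0 then d = 0 else ∃ j, d = b * e.2.2 + (b * (q - 1)) * j)
  else ∃ j, d = (e.1 + e.2.1 + b * e.2.2) + (q - 1) * j

/-- the set of reduced exponent vectors in degree `d`. -/
noncomputable def Tset (q b d : ℕ) : Finset (ℕ × ℕ × ℕ) :=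
  (Finset.range q ×ˢ Finset.range q ×ˢ Finset.range q).filter (Cond q b d)

open PowerSeries

/-- the power series `1/(1 - X^k)`. -/
noncomputable def D (k : ℕ) : PowerSeries ℤ := PowerSeries.mk fun d => if k ∣ d then 1 else 0

lemma D_mul {k : ℕ} (hk : 0 < k) : (1 - X ^ k) * D k = 1 := by
  have h : (1 - X ^ k) * D k = D k - X ^ k * D k := by ring
  rw [h]
  ext n
  rw [map_sub, coeff_X_pow_mul']
  simp only [D, coeff_mk, PowerSeries.coeff_one]
  rcases eq_or_ne n 0 with rfl | hn
  · have : ¬ (k ≤ 0) := by omega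
    simp [this]
  · simp only [hn, if_false]
    by_cases hkn : k ≤ n
    · simp only [hkn, if_true]
      by_cases hd : k ∣ n
      · have : k ∣ n - k := Nat.dvd_sub hd dvd_rfl
        simp [hd, this]
      · have : ¬ (k ∣ n - k) := by
          intro hc
          have : k ∣ (n - k) + k := Dvd.dvd.add hc dvd_rfl
          rw [Nat.sub_add_cancel hkn] at this
          exact hd this
        simp [hd, this]
    · have : ¬ (k ∣ n) := fun hd => hkn (Nat.le_of_dvd (by omega) hd)
      simp [this, hkn]

lemma mk_shift (s k : ℕ) :
    PowerSeries.mk (fun d => if ∃ j, d = s + k * j then (1 : ℤ) else 0) = X ^ s * D k := by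
  ext n
  rw [coeff_X_pow_mul', coeff_mk]
  have hiff : (∃ j, n = s + k * j) ↔ (s ≤ n ∧ k ∣ n - s) := by
    constructor
    · rintro ⟨j, rfl⟩
      exact ⟨Nat.le_add_right _ _, by simp⟩
    · rintro ⟨h1, c, hc⟩
      exact ⟨c, by omega⟩
  simp only [D, coeff_mk]
  by_cases h1 : s ≤ n
  · by_cases h2 : k ∣ n - s
    · simp [hiff.mpr ⟨h1, h2⟩, h1, h2]
    · have : ¬ ∃ j, n = s + k * j := fun hc => h2 (hiff.mp hc).2
      simp [this, h1, h2]
  · have : ¬ ∃ j, n = s + k * j := fun hc => h1 (hiff.mp hc).1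
    simp [this, h1]

lemma mk_delta : PowerSeries.mk (fun d => if d = 0 then (1 : ℤ) else 0) = 1 := by
  ext n
  simp [coeff_mk, PowerSeries.coeff_one]

/-- geometric sum `1 + X + ... + X^(q-1)`. -/
noncomputable def G (q : ℕ) : PowerSeries ℤ := ∑ i ∈ Finset.range q, X ^ i
/-- geometric sum `1 + X^b + ... + X^(b(q-1))`. -/
noncomputable def Gb (q b : ℕ) : PowerSeries ℤ := ∑ i ∈ Finset.range q, X ^ (b * i)

lemma hG (q : ℕ) : (1 - X) * G q = 1 - X ^ q := by
  have := geom_sum_mul (X : PowerSeries ℤ) q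
  rw [G]; linear_combination -this

lemma hGb (q b : ℕ) : (1 - X ^ b) * Gb q b = 1 - X ^ (q * b) := by
  have h := geom_sum_mul ((X : PowerSeries ℤ) ^ b) q
  rw [← pow_mul] at h
  have hrw : Gb q b = ∑ i ∈ Finset.range q, ((X : PowerSeries ℤ) ^ b) ^ i := by
    rw [Gb]; exact Finset.sum_congr rfl fun i _ => by rw [← pow_mul]
  rw [hrw]; linear_combination -h

lemma per_e (q b : ℕ) (hq : 2 ≤ q) (hb : 0 < b) (e1 e2 e3 : ℕ) :
    ((1 - X ^ (q-1)) * (1 - X ^ (b*(q-1))))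
        * PowerSeries.mk (fun d => if Cond q b d (e1, e2, e3) then (1:ℤ) else 0)
      = (1 - X ^ (b*(q-1))) * X ^ (e1 + e2 + b * e3)
        + (if e1 = 0 then (if e2 = 0 then
            (((1 - X ^ (q-1)) - (1 - X ^ (b*(q-1)))) * X ^ (b * e3)
              + (if e3 = 0 then
                  (1 - X ^ (q-1)) * (1 - X ^ (b*(q-1))) - (1 - X ^ (q-1)) else 0)) else 0)
          else 0) := by
  have hq1 : 0 < q - 1 := by omega
  have hbq1 : 0 < b * (q - 1) := Nat.mul_pos hb hq1
  have hQD := D_mul hq1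
  have hPD := D_mul hbq1
  by_cases h1 : e1 = 0 ∧ e2 = 0
  · obtain ⟨rfl, rfl⟩ := h1
    by_cases h2 : e3 = 0
    · subst h2
      have hfn : (fun d => if Cond q b d (0,0,0) then (1:ℤ) else 0)
          = fun d => if d = 0 then 1 else 0 := by
        funext d; exact if_congr (by simp [Cond]) rfl rfl
      rw [hfn, mk_delta]
      simp only [ite_true, eq_self_iff_true, if_true, if_pos trivial]
      ring
    · have hfn : (fun d => if Cond q b d (0,0,e3) then (1:ℤ) else 0)
          = fun d => if ∃ j, d = b * e3 + (b * (q-1)) * j then 1 else 0 := by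
        funext d; exact if_congr (by simp [Cond, h2]) rfl rfl
      rw [hfn, mk_shift]
      simp only [ite_true, eq_self_iff_true, if_true, h2, if_false, if_pos trivial]
      linear_combination ((1 - X ^ (q-1)) * X ^ (b * e3)) * hPD
  · have hfn : (fun d => if Cond q b d (e1,e2,e3) then (1:ℤ) else 0)
        = fun d => if ∃ j, d = (e1 + e2 + b * e3) + (q-1) * j then 1 else 0 := by
      funext d; exact if_congr (by simp [Cond, h1]) rfl rfl
    rw [hfn, mk_shift]
    have hite : (if e1 = 0 then (if e2 = 0 then
        (((1 - X ^ (q-1)) - (1 - X ^ (b*(q-1)))) * X ^ (b * e3)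
          + (if e3 = 0 then
              (1 - X ^ (q-1)) * (1 - X ^ (b*(q-1))) - (1 - X ^ (q-1)) else 0)) else 0)
        else 0) = (0 : PowerSeries ℤ) := by
      by_cases he1 : e1 = 0
      · have he2 : ¬ e2 = 0 := fun h => h1 ⟨he1, h⟩
        simp [he1, he2]
      · simp [he1]
    rw [hite]
    linear_combination ((1 - X ^ (b*(q-1))) * X ^ (e1 + e2 + b * e3)) * hQD

lemma sum_main (q b : ℕ) :
    (∑ e ∈ Finset.range q ×ˢ Finset.range q ×ˢ Finset.range q,
        (1 - X ^ (b*(q-1))) * X ^ (e.1 + e.2.1 + b * e.2.2))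
      = (1 - X ^ (b*(q-1))) * (G q * (G q * Gb q b)) := by
  rw [Finset.sum_product]
  have lvl1 : ∀ i : ℕ, (∑ y ∈ Finset.range q ×ˢ Finset.range q,
      (1 - X ^ (b*(q-1))) * X ^ (i + y.1 + b * y.2))
      = (1 - X ^ (b*(q-1))) * X ^ i * (G q * Gb q b) := by
    intro i
    rw [Finset.sum_product]
    have lvl2 : ∀ j : ℕ, (∑ k ∈ Finset.range q,
        (1 - X ^ (b*(q-1))) * X ^ (i + j + b * k))
        = (1 - X ^ (b*(q-1))) * X ^ i * X ^ j * Gb q b := by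
      intro j
      rw [Gb, Finset.mul_sum]
      exact Finset.sum_congr rfl fun k _ => by rw [pow_add, pow_add]; ring
    rw [Finset.sum_congr rfl fun j _ => lvl2 j]
    have hg : G q * Gb q b = ∑ j ∈ Finset.range q, X ^ j * Gb q b := by
      rw [G, Finset.sum_mul]
    rw [hg, Finset.mul_sum]
    exact Finset.sum_congr rfl fun j _ => by ring
  rw [Finset.sum_congr rfl fun i _ => lvl1 i]
  have hg : G q * (G q * Gb q b) = ∑ i ∈ Finset.range q, X ^ i * (G q * Gb q b) := by
    rw [G, Finset.sum_mul]
  rw [hg, Finset.mul_sum]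
  exact Finset.sum_congr rfl fun i _ => by ring

lemma sum_corr (q b : ℕ) (hq : 2 ≤ q) :
    (∑ e ∈ Finset.range q ×ˢ Finset.range q ×ˢ Finset.range q,
        (if e.1 = 0 then (if e.2.1 = 0 then
            (((1 - X ^ (q-1)) - (1 - X ^ (b*(q-1)))) * X ^ (b * e.2.2)
              + (if e.2.2 = 0 then
                  (1 - X ^ (q-1)) * (1 - X ^ (b*(q-1))) - (1 - X ^ (q-1)) else 0)) else 0)
          else 0))
      = ((1 - X ^ (q-1)) - (1 - X ^ (b*(q-1)))) * Gb q b
        + ((1 - X ^ (q-1)) * (1 - X ^ (b*(q-1))) - (1 - X ^ (q-1))) := by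
  have h0 : (0:ℕ) ∈ Finset.range q := Finset.mem_range.mpr (by omega)
  have pull : ∀ {α : Type} (s : Finset α) (c : Prop) [Decidable c] (f : α → PowerSeries ℤ),
      (∑ y ∈ s, if c then f y else 0) = if c then ∑ y ∈ s, f y else 0 := by
    intro α s c _ f; split_ifs <;> simp
  rw [Finset.sum_product]
  simp only [Finset.sum_ite_irrel, Finset.sum_ite_eq', if_pos h0, Finset.sum_product,
    Finset.sum_add_distrib, Gb, ← Finset.mul_sum, Finset.sum_const_zero]

lemma main_series (q b : ℕ) (hq : 2 ≤ q) (hb : 0 < b) :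
    (1 - X) ^ 2 * (1 - X ^ b) * PowerSeries.mk (fun d => ((Tset q b d).card : ℤ)) =
      1 - X ^ (q + 1) - 2 * X ^ (q * b + 1) + X ^ (q * b + 2) + X ^ (q * b + q + 1) := by
  have hq1 : 0 < q - 1 := by omega
  have hbq1 : 0 < b * (q - 1) := Nat.mul_pos hb hq1
  have hQD := D_mul hq1
  have hPD := D_mul hbq1
  have hmk : PowerSeries.mk (fun d => ((Tset q b d).card : ℤ))
      = ∑ e ∈ Finset.range q ×ˢ Finset.range q ×ˢ Finset.range q,
          PowerSeries.mk (fun d => if Cond q b d e then (1:ℤ) else 0) := by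
    ext n
    rw [map_sum]
    simp only [coeff_mk, Tset, Finset.card_filter]
    push_cast
    rfl
  have hsum : ((1 - X ^ (q-1)) * (1 - X ^ (b*(q-1))))
        * PowerSeries.mk (fun d => ((Tset q b d).card : ℤ))
      = (1 - X ^ (b*(q-1))) * (G q * (G q * Gb q b))
        + (((1 - X ^ (q-1)) - (1 - X ^ (b*(q-1)))) * Gb q b
            + ((1 - X ^ (q-1)) * (1 - X ^ (b*(q-1))) - (1 - X ^ (q-1)))) := by
    rw [hmk, Finset.mul_sum]
    rw [Finset.sum_congr rfl fun e _ => per_e q b hq hb e.1 e.2.1 e.2.2]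
    rw [Finset.sum_add_distrib, sum_main, sum_corr q b hq]
  have hW : ((1 - X ^ (q-1)) * (1 - X ^ (b*(q-1)))) * (D (q - 1) * D (b * (q - 1))) = 1 := by
    linear_combination ((1 - X ^ (b*(q-1))) * D (b * (q - 1))) * hQD + hPD
  have key : ((1 - X ^ (q-1)) * (1 - X ^ (b*(q-1)))) * ((1 - X) ^ 2 * (1 - X ^ b)
        * PowerSeries.mk (fun d => ((Tset q b d).card : ℤ)))
      = ((1 - X ^ (q-1)) * (1 - X ^ (b*(q-1)))) * (1 - X ^ (q + 1) - 2 * X ^ (q * b + 1)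
          + X ^ (q * b + 2) + X ^ (q * b + q + 1)) := by
    have hrw : ((1 - X ^ (q-1)) * (1 - X ^ (b*(q-1)))) * ((1 - X) ^ 2 * (1 - X ^ b)
          * PowerSeries.mk (fun d => ((Tset q b d).card : ℤ)))
        = (1 - X) ^ 2 * (1 - X ^ b) * (((1 - X ^ (q-1)) * (1 - X ^ (b*(q-1))))
            * PowerSeries.mk (fun d => ((Tset q b d).card : ℤ))) := by ring
    rw [hrw, hsum]
    have hGq := hG q
    have hGbq := hGb q b
    obtain ⟨c, rfl⟩ : ∃ c, q = c + 1 := ⟨q - 1, by omega⟩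
    simp only [Nat.add_sub_cancel] at hGq hGbq ⊢
    linear_combination ((1 - X ^ (b * c)) * ((1 - X) * G (c+1) + (1 - X ^ (c+1)))
        * ((1 - X ^ b) * Gb (c+1) b)) * hGq
      + ((1 - X ^ (b * c)) * (1 - X ^ (c+1)) ^ 2
          + ((1 - X ^ c) - (1 - X ^ (b * c))) * (1 - X) ^ 2) * hGbq
  calc (1 - X) ^ 2 * (1 - X ^ b) * PowerSeries.mk (fun d => ((Tset q b d).card : ℤ))
      = (((1 - X ^ (q-1)) * (1 - X ^ (b*(q-1)))) * (D (q - 1) * D (b * (q - 1))))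
          * ((1 - X) ^ 2 * (1 - X ^ b)
            * PowerSeries.mk (fun d => ((Tset q b d).card : ℤ))) := by rw [hW, one_mul]
    _ = (D (q - 1) * D (b * (q - 1))) * (((1 - X ^ (q-1)) * (1 - X ^ (b*(q-1))))
          * ((1 - X) ^ 2 * (1 - X ^ b)
            * PowerSeries.mk (fun d => ((Tset q b d).card : ℤ)))) := by ring
    _ = (D (q - 1) * D (b * (q - 1))) * (((1 - X ^ (q-1)) * (1 - X ^ (b*(q-1))))
          * (1 - X ^ (q + 1) - 2 * X ^ (q * b + 1) + X ^ (q * b + 2)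
            + X ^ (q * b + q + 1))) := by rw [key]
    _ = (((1 - X ^ (q-1)) * (1 - X ^ (b*(q-1)))) * (D (q - 1) * D (b * (q - 1))))
          * (1 - X ^ (q + 1) - 2 * X ^ (q * b + 1) + X ^ (q * b + 2)
            + X ^ (q * b + q + 1)) := by ring
    _ = 1 - X ^ (q + 1) - 2 * X ^ (q * b + 1) + X ^ (q * b + 2) + X ^ (q * b + q + 1) := by
          rw [hW, one_mul]

/-! ### arithmetic lemmas about `rdc` -/

lemma rdc_zero (q : ℕ) : rdc q 0 = 0 := by simp [rdc]

lemma rdc_eq_zero_iff (q m : ℕ) : rdc q m = 0 ↔ m = 0 := by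
  rw [rdc]; split <;> omega

lemma rdc_le {q : ℕ} (hq : 2 ≤ q) (m : ℕ) : rdc q m ≤ q - 1 := by
  rw [rdc]; split
  · omega
  · have := Nat.mod_lt (m - 1) (y := q - 1) (by omega)
    omega

lemma rdc_of_le {q m : ℕ} (h : m ≤ q - 1) : rdc q m = m := by
  rw [rdc]; split
  · omega
  · have h1 : m - 1 < q - 1 := by omega
    rw [Nat.mod_eq_of_lt h1]
    omega

lemma rdc_add_mul {q e : ℕ} (he : 1 ≤ e) (he2 : e ≤ q - 1) (k : ℕ) :
    rdc q (e + (q - 1) * k) = e := by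
  rw [rdc]
  have h1 : ¬ (e + (q - 1) * k = 0) := by
    intro h; omega
  rw [if_neg h1]
  have h2 : e + (q - 1) * k - 1 = (e - 1) + (q - 1) * k := by
    have : 0 ≤ (q - 1) * k := Nat.zero_le _
    omega
  rw [h2, Nat.add_mul_mod_self_left, Nat.mod_eq_of_lt (by omega)]
  omega

lemma exists_rdc (q m : ℕ) : ∃ k, m = rdc q m + (q - 1) * k := by
  rcases eq_or_ne m 0 with rfl | hm
  · exact ⟨0, by simp [rdc_zero]⟩
  · refine ⟨(m - 1) / (q - 1), ?_⟩
    rw [rdc, if_neg hm]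
    have h := Nat.div_add_mod (m - 1) (q - 1)
    generalize hx : (q - 1) * ((m - 1) / (q - 1)) = x at h ⊢
    omega

/-! ### the weighted degree on `Fin 3` -/

lemma weight_eval (b : ℕ) (m : Fin 3 →₀ ℕ) :
    (Finsupp.weight ![1, 1, b]) m = m 0 + m 1 + b * m 2 := by
  rw [Finsupp.weight_apply, Finsupp.sum_fintype _ _ (fun i => zero_smul ℕ (![1, 1, b] i))]
  rw [Fin.sum_univ_three]
  simp [mul_comm]

lemma cond_zero_of_zero {q b d : ℕ} (h : Cond q b d (0, 0, 0)) : d = 0 := by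
  simpa [Cond] using h

lemma cond_ne_zero {q b d : ℕ} {e : ℕ × ℕ × ℕ} (hb : 0 < b) (h : Cond q b d e) (hd : d ≠ 0) :
    e ≠ (0, 0, 0) := by
  rintro rfl
  exact hd (cond_zero_of_zero h)

lemma Tset_zero {q b : ℕ} (hq : 2 ≤ q) (hb : 0 < b) :
    Tset q b 0 = {(0, 0, 0)} := by
  ext ⟨e1, e2, e3⟩
  simp only [Tset, Finset.mem_filter, Finset.mem_product, Finset.mem_range,
    Finset.mem_singleton, Prod.mk.injEq]
  constructor
  · rintro ⟨⟨h1, h2, h3⟩, hc⟩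
    rw [Cond] at hc
    by_cases ha : e1 = 0 ∧ e2 = 0
    · rw [if_pos ha] at hc
      obtain ⟨rfl, rfl⟩ := ha
      by_cases hb3 : e3 = 0
      · exact ⟨rfl, rfl, hb3⟩
      · rw [if_neg hb3] at hc
        obtain ⟨j, hj⟩ := hc
        have h0 : b * e3 = 0 := (Nat.add_eq_zero.mp hj.symm).1
        rcases Nat.mul_eq_zero.mp h0 with h | h
        · omega
        · exact absurd h hb3
    · rw [if_neg ha] at hc
      obtain ⟨j, hj⟩ := hc
      have h0 : e1 + e2 + b * e3 = 0 := (Nat.add_eq_zero.mp hj.symm).1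
      exact absurd ⟨by omega, by omega⟩ ha
  · rintro ⟨rfl, rfl, rfl⟩
    refine ⟨⟨by omega, by omega, by omega⟩, ?_⟩
    simp [Cond]

lemma mem_Tset {q b d : ℕ} {e : ℕ × ℕ × ℕ} :
    e ∈ Tset q b d ↔ ((e.1 < q ∧ (e.2.1 < q ∧ e.2.2 < q)) ∧ Cond q b d e) := by
  unfold Tset
  rw [Finset.mem_filter, Finset.mem_product, Finset.mem_product, Finset.mem_range,
    Finset.mem_range, Finset.mem_range]

/-! ### the image of the reduction map -/

lemma image_rho (q b d : ℕ) (hq : 2 ≤ q) (hb : 0 < b) :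
    (fun m : Fin 3 →₀ ℕ => (rdc q (m 0), rdc q (m 1), rdc q (m 2))) ''
        {m : Fin 3 →₀ ℕ | (Finsupp.weight ![1, 1, b]) m = d} = ↑(Tset q b d) := by
  have htf : ∀ a b c : ℕ, ∃ m : Fin 3 →₀ ℕ, m 0 = a ∧ m 1 = b ∧ m 2 = c := by
    intro a b c
    exact ⟨Finsupp.equivFunOnFinite.symm ![a, b, c], by simp, by simp, by simp⟩
  ext e
  simp only [Set.mem_image, Set.mem_setOf_eq, Finset.coe_filter, Tset, Finset.mem_coe,
    Finset.mem_filter, Finset.mem_product, Finset.mem_range]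
  constructor
  · rintro ⟨m, hm, rfl⟩
    rw [weight_eval] at hm
    have hb0 : rdc q (m 0) ≤ q - 1 := rdc_le hq _
    have hb1 : rdc q (m 1) ≤ q - 1 := rdc_le hq _
    have hb2 : rdc q (m 2) ≤ q - 1 := rdc_le hq _
    refine ⟨⟨by dsimp only; omega, by dsimp only; omega, by dsimp only; omega⟩, ?_⟩
    obtain ⟨k0, hk0⟩ := exists_rdc q (m 0)
    obtain ⟨k1, hk1⟩ := exists_rdc q (m 1)
    obtain ⟨k2, hk2⟩ := exists_rdc q (m 2)
    rw [Cond]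
    by_cases h1 : rdc q (m 0) = 0 ∧ rdc q (m 1) = 0
    · rw [if_pos h1]
      have hm0 : m 0 = 0 := (rdc_eq_zero_iff q _).mp h1.1
      have hm1 : m 1 = 0 := (rdc_eq_zero_iff q _).mp h1.2
      by_cases h2 : rdc q (m 2) = 0
      · rw [if_pos h2]
        have hm2 : m 2 = 0 := (rdc_eq_zero_iff q _).mp h2
        rw [hm0, hm1, hm2] at hm
        omega
      · rw [if_neg h2]
        refine ⟨k2, ?_⟩
        dsimp only
        calc d = b * m 2 := by omega
          _ = b * (rdc q (m 2) + (q - 1) * k2) := by rw [← hk2]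
          _ = b * rdc q (m 2) + b * (q - 1) * k2 := by ring
    · rw [if_neg h1]
      refine ⟨k0 + k1 + b * k2, ?_⟩
      dsimp only
      rw [hk0, hk1, hk2] at hm
      rw [← hm]
      ring
  · rintro ⟨⟨h1, h2, h3⟩, hc⟩
    obtain ⟨e1, e2, e3⟩ := e
    dsimp only at h1 h2 h3 hc ⊢
    simp only [Cond] at hc
    by_cases ha : e1 = 0 ∧ e2 = 0
    · obtain ⟨rfl, rfl⟩ := ha
      rw [if_pos ⟨rfl, rfl⟩] at hc
      by_cases hz : e3 = 0
      · subst hz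
        rw [if_pos rfl] at hc
        subst hc
        obtain ⟨m, hm0, hm1, hm2⟩ := htf 0 0 0
        exact ⟨m, by rw [weight_eval, hm0, hm1, hm2]; ring, by
          rw [hm0, hm1, hm2, rdc_zero]⟩
      · rw [if_neg hz] at hc
        obtain ⟨j, rfl⟩ := hc
        obtain ⟨m, hm0, hm1, hm2⟩ := htf 0 0 (e3 + (q - 1) * j)
        refine ⟨m, by rw [weight_eval, hm0, hm1, hm2]; ring, ?_⟩
        have r2 : rdc q (e3 + (q - 1) * j) = e3 := rdc_add_mul (by omega) (by omega) j
        rw [hm0, hm1, hm2, rdc_zero, r2]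
    · rw [if_neg ha] at hc
      obtain ⟨j, rfl⟩ := hc
      by_cases he1 : e1 = 0
      · have he2 : e2 ≠ 0 := fun h => ha ⟨he1, h⟩
        obtain ⟨m, hm0, hm1, hm2⟩ := htf e1 (e2 + (q - 1) * j) e3
        refine ⟨m, by rw [weight_eval, hm0, hm1, hm2]; ring, ?_⟩
        have r0 : rdc q e1 = e1 := rdc_of_le (by omega)
        have r1 : rdc q (e2 + (q - 1) * j) = e2 := rdc_add_mul (by omega) (by omega) j
        have r2 : rdc q e3 = e3 := rdc_of_le (by omega)
        rw [hm0, hm1, hm2, r0, r1, r2]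
      · obtain ⟨m, hm0, hm1, hm2⟩ := htf (e1 + (q - 1) * j) e2 e3
        refine ⟨m, by rw [weight_eval, hm0, hm1, hm2]; ring, ?_⟩
        have r0 : rdc q (e1 + (q - 1) * j) = e1 := rdc_add_mul (by omega) (by omega) j
        have r1 : rdc q e2 = e2 := rdc_of_le (by omega)
        have r2 : rdc q e3 = e3 := rdc_of_le (by omega)
        rw [hm0, hm1, hm2, r0, r1, r2]
end P11b



open MvPolynomial

noncomputable section

variable (F : Type) [Field F] [Fintype F]

/-- The submodule of polynomials vanishing at every nonzero point of `F³`. -/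
def vanishing : Submodule F (MvPolynomial (Fin 3) F) where
  carrier := {f | ∀ y : Fin 3 → F, y ≠ 0 → eval y f = 0}
  add_mem' := fun hf hg y hy => by simp [hf y hy, hg y hy]
  zero_mem' := fun y hy => by simp
  smul_mem' := fun c f hf y hy => by simp [MvPolynomial.smul_eval, hf y hy]

/-- `S_d`: the degree-`d` weighted-homogeneous piece (weights `1, 1, b`). -/
def Sd (b d : ℕ) : Submodule F (MvPolynomial (Fin 3) F) :=
  weightedHomogeneousSubmodule F ![1, 1, b] d

/-- `I_d`: the degree-`d` piece of the vanishing ideal of `ℙ(1,1,b)(F_q)`. -/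
def Id' (b d : ℕ) : Submodule F (MvPolynomial (Fin 3) F) := Sd F b d ⊓ vanishing F

/-- The Hilbert function `H_Y(d) = dim S_d − dim I_d` of `Y = ℙ(1,1,b)(F_q)`. -/
def HY (b d : ℕ) : ℕ :=
  Module.finrank F ↥(Sd F b d) - Module.finrank F ↥(Id' F b d)

namespace P11bAux

/-- the finitude of the set of monomials of a given weighted degree -/
lemma md_finite (b d : ℕ) (hb : 0 < b) :
    {m : Fin 3 →₀ ℕ | (Finsupp.weight ![1, 1, b]) m = d}.Finite := by
  rw [← Set.finite_coe_iff]
  have hbound : ∀ m : {m : Fin 3 →₀ ℕ | (Finsupp.weight ![1, 1, b]) m = d},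
      m.1 0 ≤ d ∧ m.1 1 ≤ d ∧ m.1 2 ≤ d := by
    rintro ⟨m, hm⟩
    rw [Set.mem_setOf_eq, P11b.weight_eval] at hm
    have h2 : m 2 ≤ b * m 2 := Nat.le_mul_of_pos_left _ hb
    dsimp only
    exact ⟨by omega, by omega, by omega⟩
  apply Finite.of_injective (fun m => ((⟨m.1 0, by have := (hbound m).1; omega⟩ : Fin (d+1)),
    (⟨m.1 1, by have := (hbound m).2.1; omega⟩ : Fin (d+1)),
    (⟨m.1 2, by have := (hbound m).2.2; omega⟩ : Fin (d+1))))
  rintro m n h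
  rw [Prod.mk.injEq, Prod.mk.injEq, Fin.mk.injEq, Fin.mk.injEq, Fin.mk.injEq] at h
  apply Subtype.ext
  ext i
  fin_cases i
  · exact h.1
  · exact h.2.1
  · exact h.2.2

/-- the function on nonzero points given by a reduced exponent vector -/
def phi (e : ℕ × ℕ × ℕ) : {y : Fin 3 → F // y ≠ 0} → F :=
  fun y => y.1 0 ^ e.1 * y.1 1 ^ e.2.1 * y.1 2 ^ e.2.2

/-- evaluation at nonzero points, as a linear map -/
def evalAt : MvPolynomial (Fin 3) F →ₗ[F] ({y : Fin 3 → F // y ≠ 0} → F) where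
  toFun f := fun y => eval y.1 f
  map_add' f g := by funext y; simp
  map_smul' c f := by funext y; simp [MvPolynomial.smul_eval]

lemma ker_evalAt : LinearMap.ker (evalAt F) = vanishing F := by
  ext f
  constructor
  · intro hf y hy
    exact congrFun (LinearMap.mem_ker.mp hf) ⟨y, hy⟩
  · intro hf
    rw [LinearMap.mem_ker]
    funext y
    have hf' : ∀ y : Fin 3 → F, y ≠ 0 → eval y f = 0 := hf
    exact hf' y.1 y.2

lemma pow_rdc (a : F) (m : ℕ) : a ^ m = a ^ P11b.rdc (Fintype.card F) m := by
  rcases eq_or_ne m 0 with rfl | hm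
  · rw [P11b.rdc_zero]
  rcases eq_or_ne a 0 with rfl | ha
  · rw [zero_pow hm, zero_pow (fun h => hm ((P11b.rdc_eq_zero_iff _ m).mp h))]
  · obtain ⟨k, hk⟩ := P11b.exists_rdc (Fintype.card F) m
    conv_lhs => rw [hk]
    rw [pow_add, pow_mul, FiniteField.pow_card_sub_one_eq_one a ha, one_pow, mul_one]

lemma evalAt_single (m : Fin 3 →₀ ℕ) :
    evalAt F (AddMonoidAlgebra.single m 1)
      = phi F (P11b.rdc (Fintype.card F) (m 0), P11b.rdc (Fintype.card F) (m 1),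
          P11b.rdc (Fintype.card F) (m 2)) := by
  funext y
  show eval y.1 (AddMonoidAlgebra.single m 1) = _
  rw [single_eq_monomial, eval_monomial, Finsupp.prod_fintype _ _ (fun i => pow_zero _),
    Fin.prod_univ_three]
  rw [phi]
  dsimp only
  rw [← pow_rdc, ← pow_rdc, ← pow_rdc, one_mul]

/-- monomial exponents from triples -/
def tf (e : ℕ × ℕ × ℕ) : Fin 3 →₀ ℕ := Finsupp.equivFunOnFinite.symm ![e.1, e.2.1, e.2.2]

lemma tf_apply0 (e : ℕ × ℕ × ℕ) : tf e 0 = e.1 := by simp [tf]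
lemma tf_apply1 (e : ℕ × ℕ × ℕ) : tf e 1 = e.2.1 := by simp [tf]
lemma tf_apply2 (e : ℕ × ℕ × ℕ) : tf e 2 = e.2.2 := by simp [tf]

lemma tf_injective : Function.Injective tf := by
  intro a c h
  have h0 : a.1 = c.1 := by rw [← tf_apply0 a, ← tf_apply0 c, h]
  have h1 : a.2.1 = c.2.1 := by rw [← tf_apply1 a, ← tf_apply1 c, h]
  have h2 : a.2.2 = c.2.2 := by rw [← tf_apply2 a, ← tf_apply2 c, h]
  exact Prod.ext h0 (Prod.ext h1 h2)

lemma eval_monomial_tf (y : Fin 3 → F) (e : ℕ × ℕ × ℕ) (a : F) :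
    eval y (monomial (tf e) a) = a * (y 0 ^ e.1 * y 1 ^ e.2.1 * y 2 ^ e.2.2) := by
  rw [eval_monomial, Finsupp.prod_fintype _ _ (fun i => pow_zero _), Fin.prod_univ_three,
    tf_apply0, tf_apply1, tf_apply2, mul_assoc]

lemma sd_fin (b d : ℕ) (hb : 0 < b) : FiniteDimensional F ↥(Sd F b d) := by
  classical
  have hEq : Sd F b d
      = AddMonoidAlgebra.supported F F {m : Fin 3 →₀ ℕ | (Finsupp.weight ![1, 1, b]) m = d} :=
    weightedHomogeneousSubmodule_eq_finsupp_supported F ![1, 1, b] d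
  have hfin := md_finite b d hb
  haveI := hfin.to_subtype
  haveI : Fintype {m : Fin 3 →₀ ℕ | (Finsupp.weight ![1, 1, b]) m = d} := hfin.fintype
  let e1 : ↥(Sd F b d) ≃ₗ[F]
      ↥(AddMonoidAlgebra.supported F F {m : Fin 3 →₀ ℕ | (Finsupp.weight ![1, 1, b]) m = d}) :=
    LinearEquiv.ofEq _ _ hEq
  let e2 := AddMonoidAlgebra.supportedEquivFinsupp (S := F) (R := F)
    {m : Fin 3 →₀ ℕ | (Finsupp.weight ![1, 1, b]) m = d}
  let e3 := Finsupp.linearEquivFunOnFinite F F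
    {m : Fin 3 →₀ ℕ | (Finsupp.weight ![1, 1, b]) m = d}
  exact Module.Finite.equiv (e1.trans (e2.trans e3)).symm

set_option synthInstance.maxHeartbeats 1000000 in
set_option maxHeartbeats 1000000 in
lemma HY_eq_finrank_range (b d : ℕ) (hb : 0 < b) :
    HY F b d = Module.finrank F ↥(LinearMap.range ((evalAt F).comp (Sd F b d).subtype)) := by
  haveI := sd_fin F b d hb
  have hker : LinearMap.ker ((evalAt F).comp (Sd F b d).subtype)
      = Submodule.comap (Sd F b d).subtype (Id' F b d) := by
    rw [LinearMap.ker_comp, ker_evalAt, Id', Submodule.comap_inf, Submodule.comap_subtype_self,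
      top_inf_eq]
  have h1 : Module.finrank F ↥(Id' F b d)
      = Module.finrank F ↥(LinearMap.ker ((evalAt F).comp (Sd F b d).subtype)) := by
    rw [hker]
    exact (Submodule.comapSubtypeEquivOfLe (inf_le_left : Id' F b d ≤ Sd F b d)).finrank_eq.symm
  have h2 := LinearMap.finrank_range_add_finrank_ker ((evalAt F).comp (Sd F b d).subtype)
  rw [HY, h1]
  omega

lemma range_eq_span (b d : ℕ) (hb : 0 < b) :
    LinearMap.range ((evalAt F).comp (Sd F b d).subtype)
      = Submodule.span F (phi F '' ↑(P11b.Tset (Fintype.card F) b d)) := by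
  rw [LinearMap.range_comp, Submodule.range_subtype]
  rw [show Sd F b d
      = AddMonoidAlgebra.supported F F {m : Fin 3 →₀ ℕ | (Finsupp.weight ![1, 1, b]) m = d}
    from weightedHomogeneousSubmodule_eq_finsupp_supported F ![1, 1, b] d]
  rw [AddMonoidAlgebra.supported_eq_span_single, Submodule.map_span, ← Set.image_comp]
  congr 1
  rw [← P11b.image_rho (Fintype.card F) b d Fintype.one_lt_card hb, ← Set.image_comp]
  apply Set.image_congr
  intro m _
  exact evalAt_single F m

lemma linindep_phi (b d : ℕ) (hb : 0 < b) :
    LinearIndependent F (fun e : ↥(P11b.Tset (Fintype.card F) b d) => phi F e.1) := by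
  classical
  have hq : 2 ≤ Fintype.card F := Fintype.one_lt_card
  rw [Fintype.linearIndependent_iff]
  intro g hg
  rcases eq_or_ne d 0 with rfl | hd
  · -- T_0 = {(0,0,0)} : evaluate at the point (1,1,1)
    intro i
    have hsingle : ∀ j : ↥(P11b.Tset (Fintype.card F) b 0), j.1 = (0, 0, 0) := by
      intro j
      refine Finset.mem_singleton.mp ?_
      rw [← P11b.Tset_zero hq hb]
      exact j.2
    have hy : (fun _ : Fin 3 => (1 : F)) ≠ 0 := by
      intro h
      exact one_ne_zero (congrFun h 0)
    have := congrFun hg ⟨fun _ => 1, hy⟩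
    simp only [Finset.sum_apply, Pi.zero_apply] at this
    have heval : ∀ j : ↥(P11b.Tset (Fintype.card F) b 0),
        (g j • phi F j.1) ⟨fun _ => 1, hy⟩ = g j := by
      intro j
      rw [hsingle j]
      simp [phi]
    rw [Finset.sum_congr rfl (fun j _ => heval j)] at this
    have huniq : ∀ j : ↥(P11b.Tset (Fintype.card F) b 0), j = i :=
      fun j => Subtype.ext (by rw [hsingle j, hsingle i])
    rw [Fintype.sum_eq_single i (fun j hj => absurd (huniq j) hj)] at this
    simpa using this
  · -- d ≠ 0 : the polynomial argument
    have hbox : ∀ j : ↥(P11b.Tset (Fintype.card F) b d),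
        j.1.1 < Fintype.card F ∧ j.1.2.1 < Fintype.card F ∧ j.1.2.2 < Fintype.card F := by
      intro j
      have := P11b.mem_Tset.mp j.2
      exact ⟨this.1.1, this.1.2.1, this.1.2.2⟩
    have hne : ∀ j : ↥(P11b.Tset (Fintype.card F) b d), j.1 ≠ (0, 0, 0) := by
      intro j
      exact P11b.cond_ne_zero hb (P11b.mem_Tset.mp j.2).2 hd
    set Pp : MvPolynomial (Fin 3) F
      := ∑ i : ↥(P11b.Tset (Fintype.card F) b d), monomial (tf i.1) (g i) with hPp
    have hevnz : ∀ y : Fin 3 → F, y ≠ 0 → eval y Pp = 0 := by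
      intro y hy
      have hcf := congrFun hg ⟨y, hy⟩
      simp only [Finset.sum_apply, Pi.zero_apply] at hcf
      rw [hPp, map_sum]
      rw [Finset.sum_congr rfl (fun j _ => eval_monomial_tf F y j.1 (g j))]
      rw [← hcf]
      apply Finset.sum_congr rfl
      intro j _
      rw [Pi.smul_apply, smul_eq_mul, phi]
    have hev0 : eval (0 : Fin 3 → F) Pp = 0 := by
      rw [hPp, map_sum]
      apply Finset.sum_eq_zero
      intro j _
      rw [eval_monomial_tf]
      have hcomp : j.1.1 ≠ 0 ∨ j.1.2.1 ≠ 0 ∨ j.1.2.2 ≠ 0 := by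
        by_contra hcon
        push_neg at hcon
        exact hne j (Prod.ext hcon.1 (Prod.ext hcon.2.1 hcon.2.2))
      rcases hcomp with h | h | h <;> simp [zero_pow h]
    have hdeg : Pp ∈ restrictDegree (Fin 3) F (Fintype.card F - 1) := by
      rw [mem_restrictDegree]
      intro s hs i
      have hsup : Pp.support ⊆ Finset.univ.biUnion
          (fun j : ↥(P11b.Tset (Fintype.card F) b d) => (monomial (tf j.1) (g j)).support) := by
        rw [hPp]
        exact MvPolynomial.support_sum
      have := hsup hs
      rw [Finset.mem_biUnion] at this
      obtain ⟨j, _, hj⟩ := this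
      have hj2 := MvPolynomial.support_monomial_subset hj
      rw [Finset.mem_singleton] at hj2
      subst hj2
      have hb1 := (hbox j).1
      have hb2 := (hbox j).2.1
      have hb3 := (hbox j).2.2
      fin_cases i
      · exact le_of_eq_of_le (tf_apply0 _) (by omega)
      · exact le_of_eq_of_le (tf_apply1 _) (by omega)
      · exact le_of_eq_of_le (tf_apply2 _) (by omega)
    have hall : ∀ y : Fin 3 → F, eval y Pp = 0 := by
      intro y
      rcases eq_or_ne y 0 with rfl | hy
      · exact hev0
      · exact hevnz y hy
    have hP0 : Pp = 0 := eq_zero_of_eval_eq_zero (Fin 3) F Pp hall hdeg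
    intro i
    have hco : coeff (tf i.1) Pp = g i := by
      rw [hPp, coeff_sum]
      rw [Finset.sum_congr rfl (fun j _ => coeff_monomial (tf i.1) (tf j.1) (g j))]
      rw [Fintype.sum_eq_single i (fun j hj => ?_), if_pos rfl]
      rw [if_neg]
      intro hc
      exact hj (Subtype.ext (tf_injective hc))
    rw [hP0, coeff_zero] at hco
    exact hco.symm

lemma HY_eq_card (b d : ℕ) (hb : 0 < b) :
    HY F b d = (P11b.Tset (Fintype.card F) b d).card := by
  rw [HY_eq_finrank_range F b d hb, range_eq_span F b d hb]
  have hIm : Set.range (fun e : ↥(P11b.Tset (Fintype.card F) b d) => phi F e.1)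
      = phi F '' ↑(P11b.Tset (Fintype.card F) b d) := by
    rw [show (fun e : ↥(P11b.Tset (Fintype.card F) b d) => phi F e.1)
        = phi F ∘ (fun e : ↥(P11b.Tset (Fintype.card F) b d) => e.1) from rfl,
      Set.range_comp, Subtype.range_coe_subtype]
    rfl
  rw [← hIm, finrank_span_eq_card (linindep_phi F b d hb), Fintype.card_coe]

end P11bAux

/-- Theorem (Hilbert series of `ℙ(1,1,b)(F_q)`):
`(1−t)²(1−t^b)·Σ H_Y(d) t^d = 1 − t^{q+1} − 2t^{qb+1} + t^{qb+2} + t^{qb+q+1}`. -/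


theorem hilbert_series_P11b (q : ℕ) (hq : q = Fintype.card F) (b : ℕ) (hb : 0 < b) :
    (1 - PowerSeries.X) ^ 2 * (1 - PowerSeries.X ^ b) *
        PowerSeries.mk (fun d => (HY F b d : ℤ)) =
      1 - PowerSeries.X ^ (q + 1) - 2 * PowerSeries.X ^ (q * b + 1)
        + PowerSeries.X ^ (q * b + 2) + PowerSeries.X ^ (q * b + q + 1) := by
  subst hq
  have hfn : (fun d => (HY F b d : ℤ))
      = fun d => ((P11b.Tset (Fintype.card F) b d).card : ℤ) :=
    funext fun d => by rw [P11bAux.HY_eq_card F b d hb]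
  rw [hfn]
  exact P11b.main_series (Fintype.card F) b Fintype.one_lt_card hb


end
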